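/- There is no primitive Pythagorean triple whose odd leg γ is a perfect square and for which α + γ - β is also a perfect square. -/

import Mathlib

theorem no_ppt_odd_leg_square_and_exradius_gamma_square :
    ¬ ∃ α β γ s t : ℕ, 0 < α ∧ 0 < β ∧ 0 < γ ∧
      β ^ 2 + γ ^ 2 = α ^ 2 ∧ Nat.gcd β γ = 1 ∧ Even β ∧ Odd γ ∧
      γ = s ^ 2 ∧ α + γ - β = t ^ 2 := by
  rintro ⟨α, β, γ, s, t, hα, hβ, hγ, hpyth, hgcd, hbe, hgo, hs, ht⟩
  -- β < α
  have hβα : β < α := by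
    have h1 : β ^ 2 < α ^ 2 := by nlinarith
    exact lt_of_pow_lt_pow_left₀ 2 (Nat.zero_le _) h1
  -- α is odd
  have hαo : Odd α := by
    have h2 : Odd (α ^ 2) := by
      rw [← hpyth]
      have : Even (β ^ 2) := by simp [Nat.even_pow, hbe]
      exact this.add_odd (hgo.pow)
    rcases Nat.even_or_odd α with h | h
    · exfalso
      have : Even (α ^ 2) := by simp [Nat.even_pow, h]
      exact (Nat.not_even_iff_odd.mpr h2) this
    · exact h
  -- α and β are coprime
  have hab : Nat.Coprime α β := by
    have hdg : Nat.gcd α β ∣ γ ^ 2 := by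
      have h1 : Nat.gcd α β ∣ α ^ 2 := Dvd.dvd.pow (Nat.gcd_dvd_left _ _) two_ne_zero
      have h2 : Nat.gcd α β ∣ β ^ 2 := Dvd.dvd.pow (Nat.gcd_dvd_right _ _) two_ne_zero
      have h3 : γ ^ 2 = α ^ 2 - β ^ 2 := by omega
      rw [h3]; exact Nat.dvd_sub h1 h2
    have hbg2 : Nat.Coprime β (γ ^ 2) := Nat.Coprime.pow_right 2 hgcd
    have : Nat.gcd α β ∣ Nat.gcd β (γ ^ 2) :=
      Nat.dvd_gcd (Nat.gcd_dvd_right _ _) hdg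
    rw [hbg2] at this
    exact Nat.eq_one_of_dvd_one this
  -- α - β is odd
  have hsubo : Odd (α - β) := by
    obtain ⟨b, hb⟩ := hbe
    obtain ⟨a, ha⟩ := hαo
    refine ⟨a - b, by omega⟩
  -- α - β and α + β are coprime
  have hcop : Nat.Coprime (α - β) (α + β) := by
    set d := Nat.gcd (α - β) (α + β) with hd
    have hd1 : d ∣ α - β := Nat.gcd_dvd_left _ _
    have hd2 : d ∣ α + β := Nat.gcd_dvd_right _ _
    have hdo : Odd d := by
      rcases Nat.even_or_odd d with h | h
      · exfalso
        obtain ⟨k, hk⟩ := hd1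
        have : Even (α - β) := hk ▸ h.mul_right k
        exact (Nat.not_even_iff_odd.mpr hsubo) this
      · exact h
    have hc2 : Nat.Coprime d 2 := by
      exact hdo.coprime_two_right
    have h2a : d ∣ 2 * α := by
      have := Nat.dvd_add hd1 hd2
      have he : (α - β) + (α + β) = 2 * α := by omega
      rwa [he] at this
    have h2b : d ∣ 2 * β := by
      have := Nat.dvd_sub hd2 hd1
      have he : (α + β) - (α - β) = 2 * β := by omega
      rwa [he] at this
    have hda : d ∣ α := (Nat.Coprime.dvd_of_dvd_mul_left hc2 h2a)
    have hdb : d ∣ β := (Nat.Coprime.dvd_of_dvd_mul_left hc2 h2b)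
    have : d ∣ Nat.gcd α β := Nat.dvd_gcd hda hdb
    rw [hab] at this
    exact Nat.eq_one_of_dvd_one this
  -- (α - β)(α + β) = γ²
  have hprod : (α - β) * (α + β) = γ ^ 2 := by
    zify [hβα.le]
    have hpyth' : (β : ℤ) ^ 2 + (γ : ℤ) ^ 2 = (α : ℤ) ^ 2 := by exact_mod_cast hpyth
    linear_combination -hpyth'
  obtain ⟨p, hp⟩ := exists_eq_pow_of_mul_eq_pow
    (α := ℕ) (Nat.isUnit_iff.mpr hcop) hprod
  -- p is odd
  have hpo : Odd p := by
    rcases Nat.even_or_odd p with h | h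
    · exfalso
      have : Even (p ^ 2) := by simp [Nat.even_pow, h]
      rw [← hp] at this
      exact (Nat.not_even_iff_odd.mpr hsubo) this
    · exact h
  -- s is odd
  have hso : Odd s := by
    rcases Nat.even_or_odd s with h | h
    · exfalso
      have : Even (s ^ 2) := by simp [Nat.even_pow, h]
      rw [← hs] at this
      exact (Nat.not_even_iff_odd.mpr hgo) this
    · exact h
  -- key equation
  have key : t ^ 2 = p ^ 2 + s ^ 2 := by
    generalize hP : p ^ 2 = P at hp
    generalize hS : s ^ 2 = S at hs
    generalize hT : t ^ 2 = T at ht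
    omega
  obtain ⟨a, ha⟩ := hpo
  obtain ⟨c, hc⟩ := hso
  have hA : p ^ 2 = 4 * (a * a + a) + 1 := by rw [ha]; ring
  have hC : s ^ 2 = 4 * (c * c + c) + 1 := by rw [hc]; ring
  rw [hA, hC] at key
  rcases Nat.even_or_odd t with h | h
  · obtain ⟨d, hdd⟩ := h
    have hE : t ^ 2 = 4 * (d * d) := by rw [hdd]; ring
    rw [hE] at key
    omega
  · obtain ⟨d, hdd⟩ := h
    have hE : t ^ 2 = 4 * (d * d + d) + 1 := by rw [hdd]; ring
    rw [hE] at key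
    omega
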